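/- Let $E,F$ be Banach spaces (over the real or complex field), $1<p<\infty$, $1/p+1/p^*=1$, let $A:E^n\to F$ be a symmetric bounded $n$-linear operator and let $P:E\to F$ be the associated $n$-homogeneous polynomial $P(x)=A(x,\dots,x)$. The following are equivalent: (i) for every sequence $(x_i)_{i=1}^\infty$ in $E$ with $\sum_{i=1}^\infty\|x_i\|^{np}<\infty$, the sequence $(P(x_i))_{i=1}^\infty$ is Cohen strongly $p$-summing in $F$; (ii) there exists $C>0$ such that $\sum_{i=1}^m|\varphi_i(P(x_i))|\le C\,(\sum_{i=1}^m\|x_i\|^{np})^{1/p}\,\|(\varphi_i)_{i=1}^m\|_{w,p^*}$ for all $m\in\mathbb{N}$, all $x_1,\dots,x_m\in E$ and all $\varphi_1,\dots,\varphi_m\in F'$. -/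

import Mathlib

open scoped BigOperators

/-- The weak `q`-norm of a finite family of continuous linear functionals on `F`. -/
noncomputable def weakNorm {𝕜 F : Type*} [RCLike 𝕜] [NormedAddCommGroup F] [NormedSpace 𝕜 F]
    {ι : Type*} [Fintype ι] (q : ℝ) (φ : ι → F →L[𝕜] 𝕜) : ℝ :=
  ⨆ y : Metric.closedBall (0 : F) 1, (∑ i, ‖φ i (y : F)‖ ^ q) ^ (1 / q)

section helpers
variable {𝕜 F : Type*} [RCLike 𝕜] [NormedAddCommGroup F] [NormedSpace 𝕜 F]
    {ι : Type*} [Fintype ι] {q : ℝ}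

lemma weakNorm_bdd (hq0 : 0 < q) (φ : ι → F →L[𝕜] 𝕜) :
    BddAbove (Set.range fun y : Metric.closedBall (0 : F) 1 =>
      (∑ i, ‖φ i (y : F)‖ ^ q) ^ (1 / q)) := by
  refine ⟨(∑ i, ‖φ i‖ ^ q) ^ (1 / q), ?_⟩
  rintro _ ⟨y, rfl⟩
  have hy : ‖(y : F)‖ ≤ 1 := by
    have := y.2
    rwa [Metric.mem_closedBall, dist_zero_right] at this
  refine Real.rpow_le_rpow (by positivity) ?_ (by positivity)
  refine Finset.sum_le_sum fun i _ => Real.rpow_le_rpow (norm_nonneg _) ?_ hq0.le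
  calc ‖φ i (y : F)‖ ≤ ‖φ i‖ * ‖(y : F)‖ := (φ i).le_opNorm _
    _ ≤ ‖φ i‖ * 1 := by gcongr
    _ = ‖φ i‖ := mul_one _

lemma le_weakNorm (hq0 : 0 < q) (φ : ι → F →L[𝕜] 𝕜) {y : F}
    (hy : y ∈ Metric.closedBall (0 : F) 1) :
    (∑ i, ‖φ i y‖ ^ q) ^ (1 / q) ≤ weakNorm q φ :=
  le_ciSup (weakNorm_bdd hq0 φ) (⟨y, hy⟩ : Metric.closedBall (0 : F) 1)

lemma weakNorm_nonneg' (hq0 : 0 < q) (φ : ι → F →L[𝕜] 𝕜) : 0 ≤ weakNorm q φ := by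
  have h0 : (0 : F) ∈ Metric.closedBall (0 : F) 1 := by simp
  refine le_trans ?_ (le_weakNorm hq0 φ h0)
  positivity

lemma weakNorm_le (φ : ι → F →L[𝕜] 𝕜) {a : ℝ} (h : ∀ y ∈ Metric.closedBall (0 : F) 1,
    (∑ i, ‖φ i y‖ ^ q) ^ (1 / q) ≤ a) (ha : 0 ≤ a) : weakNorm q φ ≤ a :=
  Real.iSup_le (fun y => h y y.2) ha

end helpers

set_option maxHeartbeats 1000000

/-- For the `n`-homogeneous polynomial `P(x) = A(x,…,x)` associated with a symmetric
bounded `n`-linear operator `A : Eⁿ → F`: `P` maps absolutely `np`-summable sequences to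
Cohen strongly `p`-summing sequences iff the Cohen summing inequality for polynomials holds. -/
theorem stmt4 {𝕜 : Type*} [RCLike 𝕜] {n : ℕ} (hn : 0 < n)
    {E F : Type*} [NormedAddCommGroup E] [NormedSpace 𝕜 E] [CompleteSpace E]
    [NormedAddCommGroup F] [NormedSpace 𝕜 F] [CompleteSpace F]
    (p q : ℝ) (hp : 1 < p) (hq : 1 / p + 1 / q = 1)
    (A : ContinuousMultilinearMap 𝕜 (fun _ : Fin n => E) F)
    (hA : ∀ (σ : Equiv.Perm (Fin n)) (x : Fin n → E), A (x ∘ σ) = A x)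
    (P : E → F) (hP : ∀ x, P x = A (fun _ => x)) :
    (∀ x : ℕ → E, Summable (fun i => ‖x i‖ ^ ((n : ℝ) * p)) →
      ∀ φ : ℕ → F →L[𝕜] 𝕜,
        (∃ C : ℝ, ∀ y ∈ Metric.closedBall (0 : F) 1, ∀ s : Finset ℕ,
            ∑ i ∈ s, ‖φ i y‖ ^ q ≤ C) →
        Summable (fun i => ‖φ i (P (x i))‖))
    ↔ (∃ C > 0, ∀ (m : ℕ) (x : Fin m → E) (φ : Fin m → F →L[𝕜] 𝕜),
        ∑ i, ‖φ i (P (x i))‖ ≤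
          C * (∑ i, ‖x i‖ ^ ((n : ℝ) * p)) ^ (1 / p) * weakNorm q φ) := by
  have hp0 : 0 < p := lt_trans one_pos hp
  have hq0 : 0 < q := by
    have h1 : 0 < 1 / q := by
      have : 1 / p < 1 := by
        rw [div_lt_one hp0]; exact hp
      linarith
    exact (one_div_pos).mp h1
  constructor
  · intro h
    by_contra hcon
    push_neg at hcon
    have hnR : ((n : ℝ)) ≠ 0 := Nat.cast_ne_zero.mpr hn.ne'
    have hnp : (n : ℝ) * p ≠ 0 := by positivity
    have h2pow : ∀ k : ℕ, (2:ℝ) ^ (-(k:ℝ)) = (1/2:ℝ)^k := by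
      intro k
      rw [Real.rpow_neg (by norm_num), Real.rpow_natCast, one_div, inv_pow]
    have key : ∀ k : ℕ, ∃ (m : ℕ) (x : Fin m → E) (φ : Fin m → F →L[𝕜] 𝕜),
        (∑ i, ‖x i‖ ^ ((n : ℝ) * p) ≤ (1/2:ℝ)^k) ∧
        (∀ y ∈ Metric.closedBall (0:F) 1, ∑ i, ‖φ i y‖ ^ q ≤ (1/2:ℝ)^k) ∧
        ((k+1:ℝ) ≤ ∑ i, ‖φ i (P (x i))‖) := by
      intro k
      obtain ⟨m, x0, φ0, hlt⟩ := hcon (((k:ℝ)+1) * 4^k) (by positivity)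
      set S := ∑ i, ‖x0 i‖ ^ ((n:ℝ)*p) with hS_def
      set W := weakNorm q φ0 with hW_def
      set L := ∑ i, ‖φ0 i (P (x0 i))‖ with hL_def
      have hS0 : 0 ≤ S := Finset.sum_nonneg fun i _ => Real.rpow_nonneg (norm_nonneg _) _
      have hW0 : 0 ≤ W := weakNorm_nonneg' hq0 φ0
      have hS : 0 < S := by
        rcases hS0.lt_or_eq with h' | h'
        · exact h'
        · exfalso
          have hx0 : ∀ i, x0 i = 0 := by
            intro i
            have hterm := (Finset.sum_eq_zero_iff_of_nonneg
              (fun i _ => Real.rpow_nonneg (norm_nonneg _) _)).mp h'.symm i (Finset.mem_univ i)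
            exact norm_eq_zero.mp ((Real.rpow_eq_zero (norm_nonneg _) hnp).mp hterm)
          have hL : L = 0 := by
            rw [hL_def]
            apply Finset.sum_eq_zero; intro i _
            rw [hx0 i, hP, A.map_coord_zero (⟨0, hn⟩ : Fin n) rfl, map_zero, norm_zero]
          have hSp : S ^ (1/p) = 0 := by
            rw [← h', Real.zero_rpow (one_div_pos.mpr hp0).ne']
          have : ((k:ℝ)+1) * 4^k * S^(1/p) * W = 0 := by rw [hSp]; ring
          rw [hL, this] at hlt
          exact lt_irrefl 0 hlt
      have hW : 0 < W := by
        rcases hW0.lt_or_eq with h' | h'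
        · exact h'
        · exfalso
          have hφ0 : ∀ i, φ0 i (P (x0 i)) = 0 := by
            intro i
            have hzero : ∀ y ∈ Metric.closedBall (0:F) 1, φ0 i y = 0 := by
              intro y hy
              have h1 := le_weakNorm hq0 φ0 hy
              rw [← hW_def, ← h'] at h1
              have h2' : (∑ j, ‖φ0 j y‖^q)^(1/q) = 0 :=
                le_antisymm h1 (Real.rpow_nonneg (by positivity) _)
              have h3 : ∑ j, ‖φ0 j y‖^q = 0 :=
                (Real.rpow_eq_zero (by positivity) (one_div_pos.mpr hq0).ne').mp h2'
              have h4 := (Finset.sum_eq_zero_iff_of_nonneg (fun j _ => by positivity)).mp h3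
                i (Finset.mem_univ i)
              exact norm_eq_zero.mp ((Real.rpow_eq_zero (norm_nonneg _) hq0.ne').mp h4)
            set v := P (x0 i) with hv_def
            by_cases hv : v = 0
            · rw [hv, map_zero]
            · have hvn : ‖v‖ ≠ 0 := norm_ne_zero_iff.mpr hv
              have hmem : ((‖v‖⁻¹ : ℝ) : 𝕜) • v ∈ Metric.closedBall (0:F) 1 := by
                rw [Metric.mem_closedBall, dist_zero_right, norm_smul, RCLike.norm_ofReal,
                  abs_of_nonneg (by positivity), inv_mul_cancel₀ hvn]
              have hz := hzero _ hmem
              rw [map_smul, smul_eq_mul] at hz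
              have hne : ((‖v‖⁻¹ : ℝ) : 𝕜) ≠ 0 := by
                exact_mod_cast inv_ne_zero hvn
              exact (mul_eq_zero.mp hz).resolve_left hne
          have hL : L = 0 := by
            rw [hL_def]
            exact Finset.sum_eq_zero fun i _ => by rw [hφ0 i, norm_zero]
          have : ((k:ℝ)+1) * 4^k * S^(1/p) * W = 0 := by rw [← h']; ring
          rw [hL, this] at hlt
          exact lt_irrefl 0 hlt
      set b := (2:ℝ) ^ (-(k:ℝ)) / S ^ (1/p) with hb_def
      have hb : 0 < b := div_pos (Real.rpow_pos_of_pos two_pos _) (Real.rpow_pos_of_pos hS _)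
      set t := b ^ ((n:ℝ)⁻¹) with ht_def
      have ht : 0 < t := Real.rpow_pos_of_pos hb _
      set s := (2:ℝ) ^ (-(k:ℝ)/q) / W with hs_def
      have hs : 0 < s := div_pos (Real.rpow_pos_of_pos two_pos _) hW
      have htn : t ^ n = b := by
        rw [ht_def, ← Real.rpow_natCast (b ^ ((n:ℝ)⁻¹)) n, ← Real.rpow_mul hb.le,
          inv_mul_cancel₀ hnR, Real.rpow_one]
      refine ⟨m, fun i => ((t : ℝ) : 𝕜) • x0 i, fun i => ((s : ℝ) : 𝕜) • φ0 i, ?_, ?_, ?_⟩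
      · have hterm : ∀ i : Fin m,
            ‖((t:ℝ):𝕜) • x0 i‖ ^ ((n:ℝ)*p) = t ^ ((n:ℝ)*p) * ‖x0 i‖ ^ ((n:ℝ)*p) := by
          intro i
          rw [norm_smul, RCLike.norm_ofReal, abs_of_pos ht,
            Real.mul_rpow ht.le (norm_nonneg _)]
        calc ∑ i, ‖((t:ℝ):𝕜) • x0 i‖ ^ ((n:ℝ)*p)
            = t ^ ((n:ℝ)*p) * S := by
              simp only [hterm]; rw [← Finset.mul_sum, hS_def]
          _ = b ^ p * S := by
              rw [ht_def, ← Real.rpow_mul hb.le]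
              congr 2
              field_simp
          _ = (2:ℝ) ^ (-(k:ℝ)*p) := by
              rw [hb_def, Real.div_rpow (Real.rpow_nonneg two_pos.le _)
                (Real.rpow_nonneg hS0 _), ← Real.rpow_mul two_pos.le,
                ← Real.rpow_mul hS0, one_div_mul_cancel hp0.ne', Real.rpow_one,
                div_mul_cancel₀ _ hS.ne']
          _ ≤ (1/2:ℝ)^k := by
              rw [← h2pow k]
              apply Real.rpow_le_rpow_of_exponent_le one_le_two
              nlinarith [Nat.cast_nonneg (α := ℝ) k]
      · intro y hy
        have hterm : ∀ i : Fin m,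
            ‖(((s:ℝ):𝕜) • φ0 i) y‖ ^ q = s ^ q * ‖φ0 i y‖ ^ q := by
          intro i
          rw [ContinuousLinearMap.smul_apply, norm_smul, RCLike.norm_ofReal, abs_of_pos hs,
            Real.mul_rpow hs.le (norm_nonneg _)]
        have hsum_le : ∑ i, ‖φ0 i y‖ ^ q ≤ W ^ q := by
          have h1 := le_weakNorm hq0 φ0 hy
          rw [← hW_def] at h1
          have h2' := Real.rpow_le_rpow (Real.rpow_nonneg (by positivity) _) h1 hq0.le
          rwa [← Real.rpow_mul (by positivity), one_div_mul_cancel hq0.ne',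
            Real.rpow_one] at h2'
        calc ∑ i, ‖(((s:ℝ):𝕜) • φ0 i) y‖ ^ q
            = s ^ q * ∑ i, ‖φ0 i y‖ ^ q := by
              simp only [hterm]; rw [← Finset.mul_sum]
          _ ≤ s ^ q * W ^ q :=
              mul_le_mul_of_nonneg_left hsum_le (Real.rpow_nonneg hs.le _)
          _ = (1/2:ℝ)^k := by
              rw [hs_def, Real.div_rpow (Real.rpow_nonneg two_pos.le _) hW0,
                div_mul_cancel₀ _ (ne_of_gt (Real.rpow_pos_of_pos hW _)),
                ← Real.rpow_mul two_pos.le, div_mul_cancel₀ _ hq0.ne', h2pow k]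
      · have hPt : ∀ i : Fin m,
            P (((t:ℝ):𝕜) • x0 i) = (((t:ℝ):𝕜))^n • P (x0 i) := by
          intro i
          rw [hP, hP]
          have := A.map_smul_univ (fun _ : Fin n => ((t:ℝ):𝕜)) (fun _ => x0 i)
          simpa [Finset.prod_const] using this
        have hterm : ∀ i : Fin m,
            ‖(((s:ℝ):𝕜) • φ0 i) (P (((t:ℝ):𝕜) • x0 i))‖
              = s * t^n * ‖φ0 i (P (x0 i))‖ := by
          intro i
          rw [hPt i, ContinuousLinearMap.smul_apply, map_smul, smul_eq_mul, smul_eq_mul,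
            norm_mul, norm_mul, norm_pow, RCLike.norm_ofReal, RCLike.norm_ofReal,
            abs_of_pos hs, abs_of_pos ht]
          ring
        have hSp : (0:ℝ) < S^(1/p) := Real.rpow_pos_of_pos hS _
        have hgoal : ((k:ℝ)+1) ≤ s * t^n * (((k:ℝ)+1) * 4^k * S^(1/p) * W) := by
          rw [htn, hs_def, hb_def]
          have heq : (2:ℝ)^(-(k:ℝ)/q) / W * ((2:ℝ)^(-(k:ℝ)) / S^(1/p))
                * (((k:ℝ)+1) * 4^k * S^(1/p) * W)
              = ((k:ℝ)+1) * (4^k * (2:ℝ)^(-(k:ℝ)) * (2:ℝ)^(-(k:ℝ)/q)) := by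
            field_simp
          rw [heq]
          have hfac : (1:ℝ) ≤ 4^k * (2:ℝ)^(-(k:ℝ)) * (2:ℝ)^(-(k:ℝ)/q) := by
            have h4 : (4:ℝ)^k = (2:ℝ)^((2*k : ℕ) : ℝ) := by
              rw [Real.rpow_natCast, pow_mul]
              norm_num
            rw [h4, ← Real.rpow_add two_pos, ← Real.rpow_add two_pos]
            have hexp : ((2*k:ℕ):ℝ) + (-(k:ℝ)) + (-(k:ℝ)/q) = (k:ℝ) * (1/p) := by
              have h1p : 1/p = 1 - 1/q := by linarith
              rw [h1p]
              push_cast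
              field_simp
              ring
            rw [hexp]
            calc (1:ℝ) = (2:ℝ)^(0:ℝ) := (Real.rpow_zero 2).symm
              _ ≤ (2:ℝ)^((k:ℝ)*(1/p)) :=
                Real.rpow_le_rpow_of_exponent_le one_le_two (by positivity)
          nlinarith [Nat.cast_nonneg (α := ℝ) k, hfac]
        calc ((k:ℝ)+1) ≤ s * t^n * (((k:ℝ)+1) * 4^k * S^(1/p) * W) := hgoal
          _ ≤ s * t^n * L := mul_le_mul_of_nonneg_left hlt.le (by positivity)
          _ = ∑ i, ‖(((s:ℝ):𝕜) • φ0 i) (P (((t:ℝ):𝕜) • x0 i))‖ := by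
              simp only [hterm]; rw [← Finset.mul_sum, hL_def]
    choose m x φ ha hb hc using key
    classical
    obtain ⟨X, hXlt, hXge⟩ : ∃ X : ℕ → ℕ → E,
        (∀ k i (h : i < m k), X k i = x k ⟨i, h⟩) ∧ (∀ k i, m k ≤ i → X k i = 0) :=
      ⟨fun k i => if h : i < m k then x k ⟨i, h⟩ else 0,
        fun k i h => dif_pos h, fun k i h => dif_neg (not_lt.mpr h)⟩
    obtain ⟨Φ, hΦlt, hΦge⟩ : ∃ Φ : ℕ → ℕ → (F →L[𝕜] 𝕜),
        (∀ k i (h : i < m k), Φ k i = φ k ⟨i, h⟩) ∧ (∀ k i, m k ≤ i → Φ k i = 0) :=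
      ⟨fun k i => if h : i < m k then φ k ⟨i, h⟩ else 0,
        fun k i h => dif_pos h, fun k i h => dif_neg (not_lt.mpr h)⟩
    have hgeo : ∀ K : ℕ, ∑ k ∈ Finset.range K, ((1:ℝ)/2)^k ≤ 2 := by
      intro K
      have hs := Summable.sum_le_tsum (Finset.range K) (fun i _ => by positivity)
        (summable_geometric_of_lt_one (by norm_num) (by norm_num : (1/2:ℝ) < 1))
      rwa [tsum_geometric_two] at hs
    have hXrange : ∀ (k N : ℕ),
        ∑ i ∈ Finset.range N, ‖X k i‖ ^ ((n:ℝ)*p) ≤ (1/2:ℝ)^k := by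
      intro k N
      have step1 : ∑ i ∈ Finset.range N, ‖X k i‖ ^ ((n:ℝ)*p)
          ≤ ∑ i ∈ Finset.range (max N (m k)), ‖X k i‖ ^ ((n:ℝ)*p) :=
        Finset.sum_le_sum_of_subset_of_nonneg
          (Finset.range_subset_range.mpr (le_max_left _ _)) (fun i _ _ => by positivity)
      have step2 : ∑ i ∈ Finset.range (max N (m k)), ‖X k i‖ ^ ((n:ℝ)*p)
          = ∑ i ∈ Finset.range (m k), ‖X k i‖ ^ ((n:ℝ)*p) := by
        symm
        apply Finset.sum_subset (Finset.range_subset_range.mpr (le_max_right _ _))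
        intro i _ hni
        have hge : m k ≤ i := by simpa [Finset.mem_range, not_lt] using hni
        rw [hXge k i hge, norm_zero, Real.zero_rpow hnp]
      have step3 : ∑ i ∈ Finset.range (m k), ‖X k i‖ ^ ((n:ℝ)*p)
          = ∑ i : Fin (m k), ‖x k i‖ ^ ((n:ℝ)*p) := by
        rw [← Fin.sum_univ_eq_sum_range (fun i => ‖X k i‖ ^ ((n:ℝ)*p)) (m k)]
        apply Finset.sum_congr rfl
        intro i _
        rw [hXlt k i.1 i.isLt, Fin.eta]
      rw [step2, step3] at step1
      exact step1.trans (ha k)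
    have hΦrange : ∀ (k N : ℕ) (y : F), y ∈ Metric.closedBall (0:F) 1 →
        ∑ i ∈ Finset.range N, ‖Φ k i y‖ ^ q ≤ (1/2:ℝ)^k := by
      intro k N y hy
      have step1 : ∑ i ∈ Finset.range N, ‖Φ k i y‖ ^ q
          ≤ ∑ i ∈ Finset.range (max N (m k)), ‖Φ k i y‖ ^ q :=
        Finset.sum_le_sum_of_subset_of_nonneg
          (Finset.range_subset_range.mpr (le_max_left _ _)) (fun i _ _ => by positivity)
      have step2 : ∑ i ∈ Finset.range (max N (m k)), ‖Φ k i y‖ ^ q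
          = ∑ i ∈ Finset.range (m k), ‖Φ k i y‖ ^ q := by
        symm
        apply Finset.sum_subset (Finset.range_subset_range.mpr (le_max_right _ _))
        intro i _ hni
        have hge : m k ≤ i := by simpa [Finset.mem_range, not_lt] using hni
        rw [hΦge k i hge, ContinuousLinearMap.zero_apply, norm_zero, Real.zero_rpow hq0.ne']
      have step3 : ∑ i ∈ Finset.range (m k), ‖Φ k i y‖ ^ q
          = ∑ i : Fin (m k), ‖φ k i y‖ ^ q := by
        rw [← Fin.sum_univ_eq_sum_range (fun i => ‖Φ k i y‖ ^ q) (m k)]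
        apply Finset.sum_congr rfl
        intro i _
        rw [hΦlt k i.1 i.isLt, Fin.eta]
      rw [step2, step3] at step1
      exact step1.trans (hb k y hy)
    have hblock : ∀ k : ℕ, ((k:ℝ)+1) ≤ ∑ i ∈ Finset.range (m k), ‖Φ k i (P (X k i))‖ := by
      intro k
      have step3 : ∑ i ∈ Finset.range (m k), ‖Φ k i (P (X k i))‖
          = ∑ i : Fin (m k), ‖φ k i (P (x k i))‖ := by
        rw [← Fin.sum_univ_eq_sum_range (fun i => ‖Φ k i (P (X k i))‖) (m k)]
        apply Finset.sum_congr rfl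
        intro i _
        rw [hXlt k i.1 i.isLt, hΦlt k i.1 i.isLt, Fin.eta]
      rw [step3]
      exact hc k
    have hrect : ∀ (g : ℕ → ℕ → ℝ), (∀ k i, 0 ≤ g k i) →
        (∀ k N, ∑ i ∈ Finset.range N, g k i ≤ ((1:ℝ)/2)^k) →
        ∀ u : Finset ℕ,
          ∑ j ∈ u, g (Nat.pairEquiv.symm j).1 (Nat.pairEquiv.symm j).2 ≤ 2 := by
      intro g hg hgb u
      have h1 : ∑ j ∈ u, g (Nat.pairEquiv.symm j).1 (Nat.pairEquiv.symm j).2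
          = ∑ pr ∈ u.image (fun j => Nat.pairEquiv.symm j), g pr.1 pr.2 := by
        rw [Finset.sum_image (fun a _ b _ hab => Nat.pairEquiv.symm.injective hab)]
      rw [h1]
      set v := u.image (fun j => Nat.pairEquiv.symm j) with hv
      set K := v.sup Prod.fst + 1 with hK
      set N := v.sup Prod.snd + 1 with hN
      have hsub : v ⊆ Finset.range K ×ˢ Finset.range N := by
        intro pr hpr
        rw [Finset.mem_product, Finset.mem_range, Finset.mem_range]
        exact ⟨Nat.lt_succ_of_le (Finset.le_sup (f := Prod.fst) hpr),
          Nat.lt_succ_of_le (Finset.le_sup (f := Prod.snd) hpr)⟩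
      calc ∑ pr ∈ v, g pr.1 pr.2
          ≤ ∑ pr ∈ Finset.range K ×ˢ Finset.range N, g pr.1 pr.2 :=
            Finset.sum_le_sum_of_subset_of_nonneg hsub (fun pr _ _ => hg _ _)
        _ = ∑ k ∈ Finset.range K, ∑ i ∈ Finset.range N, g k i :=
            Finset.sum_product _ _ _
        _ ≤ ∑ k ∈ Finset.range K, ((1:ℝ)/2)^k :=
            Finset.sum_le_sum (fun k _ => hgb k N)
        _ ≤ 2 := hgeo K
    have hxsum : Summable (fun j : ℕ =>
        ‖X (Nat.pairEquiv.symm j).1 (Nat.pairEquiv.symm j).2‖ ^ ((n:ℝ)*p)) :=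
      summable_of_sum_le (fun j => by positivity)
        (fun u => hrect (fun k i => ‖X k i‖ ^ ((n:ℝ)*p)) (fun k i => by positivity)
          hXrange u)
    have hsummable := h
      (fun j => X (Nat.pairEquiv.symm j).1 (Nat.pairEquiv.symm j).2) hxsum
      (fun j => Φ (Nat.pairEquiv.symm j).1 (Nat.pairEquiv.symm j).2)
      ⟨2, fun y hy u => hrect (fun k i => ‖Φ k i y‖ ^ q) (fun k i => by positivity)
        (fun k N => hΦrange k N y hy) u⟩
    set T := ∑' j : ℕ, ‖Φ (Nat.pairEquiv.symm j).1 (Nat.pairEquiv.symm j).2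
      (P (X (Nat.pairEquiv.symm j).1 (Nat.pairEquiv.symm j).2))‖ with hT
    have hub : ∀ k : ℕ, ((k:ℝ)+1) ≤ T := by
      intro k
      have hinj : ∀ a ∈ Finset.range (m k), ∀ b ∈ Finset.range (m k),
          Nat.pairEquiv (k,a) = Nat.pairEquiv (k,b) → a = b := by
        intro a _ b _ hab
        have := Nat.pairEquiv.injective hab
        exact (Prod.ext_iff.mp this).2
      have hsum_eq : ∑ j ∈ (Finset.range (m k)).image (fun i => Nat.pairEquiv (k, i)),
          ‖Φ (Nat.pairEquiv.symm j).1 (Nat.pairEquiv.symm j).2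
            (P (X (Nat.pairEquiv.symm j).1 (Nat.pairEquiv.symm j).2))‖
          = ∑ i ∈ Finset.range (m k), ‖Φ k i (P (X k i))‖ := by
        rw [Finset.sum_image hinj]
        apply Finset.sum_congr rfl
        intro i _
        simp [Equiv.symm_apply_apply]
      have h2' := Summable.sum_le_tsum ((Finset.range (m k)).image (fun i => Nat.pairEquiv (k, i)))
        (fun j _ => norm_nonneg _) hsummable
      rw [hsum_eq] at h2'
      exact (hblock k).trans (h2'.trans_eq hT.symm)
    obtain ⟨k, hk⟩ := exists_nat_gt T
    have h1 := hub k
    linarith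
  · rintro ⟨C, hC, hineq⟩ x hx φ ⟨C', hC'⟩
    have hC'0 : 0 ≤ C' := by
      have := hC' 0 (by simp) ∅
      simpa using this
    refine summable_of_sum_le (c := C * (∑' i, ‖x i‖ ^ ((n : ℝ) * p)) ^ (1 / p) * C' ^ (1 / q))
      (fun i => norm_nonneg _) (fun u => ?_)
    -- enumerate u by Fin u.card
    have e : Fin u.card ≃ {j // j ∈ u} := u.equivFin.symm
    have hsum_eq : ∀ (f : ℕ → ℝ), ∑ j ∈ u, f j = ∑ i : Fin u.card, f (e i) := by
      intro f
      rw [← Finset.sum_coe_sort u f]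
      exact (Equiv.sum_comp e (fun j => f j)).symm
    rw [hsum_eq]
    calc ∑ i : Fin u.card, ‖φ (e i) (P (x (e i)))‖
        ≤ C * (∑ i : Fin u.card, ‖x (e i)‖ ^ ((n : ℝ) * p)) ^ (1 / p) *
            weakNorm q (fun i => φ (e i)) := hineq u.card _ _
      _ ≤ C * (∑' i, ‖x i‖ ^ ((n : ℝ) * p)) ^ (1 / p) * C' ^ (1 / q) := by
          have h1 : ∑ i : Fin u.card, ‖x (e i)‖ ^ ((n : ℝ) * p)
              ≤ ∑' i, ‖x i‖ ^ ((n : ℝ) * p) := by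
            rw [← hsum_eq (fun j => ‖x j‖ ^ ((n : ℝ) * p))]
            exact Summable.sum_le_tsum u (fun i _ => by positivity) hx
          have h2 : weakNorm q (fun i => φ (e i)) ≤ C' ^ (1 / q) := by
            refine weakNorm_le _ (fun y hy => ?_) (by positivity)
            refine Real.rpow_le_rpow (by positivity) ?_ (by positivity)
            rw [← hsum_eq (fun j => ‖φ j y‖ ^ q)]
            exact hC' y hy u
          have h3 : 0 ≤ ∑ i : Fin u.card, ‖x (e i)‖ ^ ((n : ℝ) * p) := by positivity
          gcongr
          · exact weakNorm_nonneg' hq0 _
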